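/- Let G be a finite simple graph and let S be a set of vertices of G. Then there exist disjoint vertex sets X and Y with X ⊆ S such that the number of edges of G having one endpoint in X and the other endpoint in Y is at least (1/6)·Σ_{w∈S} deg(w). -/
import Mathlib

open scoped Classical
open Finset

lemma cut_count {V : Type*} [Fintype V] [DecidableEq V] (S : Finset V) {u v : V}
    (huv : u ≠ v) (hu : u ∈ S) :
    2 ^ (S.card - 1) ≤
      ∑ A ∈ S.powerset, (if ∃ x ∈ A, ∃ y ∈ Aᶜ, s(u,v) = s(x,y) then 1 else 0) := by
  set ψ : Finset V → Finset V := fun B => if v ∈ B then B else insert u B with hψ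
  have hmem : ∀ B ∈ (S.erase u).powerset,
      ψ B ∈ S.powerset ∧ (∃ x ∈ ψ B, ∃ y ∈ (ψ B)ᶜ, s(u,v) = s(x,y)) := by
    intro B hB
    rw [mem_powerset] at hB
    have huB : u ∉ B := fun h => (mem_erase.mp (hB h)).1 rfl
    have hBS : B ⊆ S := hB.trans (erase_subset _ _)
    by_cases hv : v ∈ B
    · rw [hψ]
      simp only [if_pos hv, mem_powerset]
      exact ⟨hBS, v, hv, u, by simpa [Finset.mem_compl] using huB, Sym2.eq_swap⟩
    · rw [hψ]
      simp only [if_neg hv, mem_powerset]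
      refine ⟨insert_subset hu hBS, u, mem_insert_self _ _, v, ?_, rfl⟩
      simp [Finset.mem_compl, hv, Ne.symm huv]
  have hinj : Set.InjOn ψ ((S.erase u).powerset : Set (Finset V)) := by
    intro B1 h1 B2 h2 heq
    simp only [mem_coe, mem_powerset] at h1 h2
    have hu1 : u ∉ B1 := fun h => (mem_erase.mp (h1 h)).1 rfl
    have hu2 : u ∉ B2 := fun h => (mem_erase.mp (h2 h)).1 rfl
    rw [hψ] at heq
    by_cases v1 : v ∈ B1 <;> by_cases v2 : v ∈ B2 <;>
      simp only [if_pos, if_neg, v1, v2, if_true, if_false] at heq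
    · exact heq
    · exact absurd (heq ▸ mem_insert_self u B2) hu1
    · exact absurd (heq ▸ mem_insert_self u B1) hu2
    · rw [← erase_insert hu1, ← erase_insert hu2, heq]
  set I := ((S.erase u).powerset).image ψ with hI
  have hIsub : I ⊆ S.powerset := by
    intro A hA
    obtain ⟨B, hB, rfl⟩ := mem_image.mp hA
    exact (hmem B hB).1
  have hIcard : I.card = 2 ^ (S.card - 1) := by
    rw [hI, card_image_of_injOn hinj, card_powerset, card_erase_of_mem hu]
  calc 2 ^ (S.card - 1)
      = ∑ _A ∈ I, 1 := by rw [Finset.sum_const, smul_eq_mul, mul_one, hIcard]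
    _ = ∑ A ∈ I, (if ∃ x ∈ A, ∃ y ∈ Aᶜ, s(u,v) = s(x,y) then 1 else 0) := by
        refine Finset.sum_congr rfl fun A hA => ?_
        obtain ⟨B, hB, rfl⟩ := mem_image.mp hA
        rw [if_pos (hmem B hB).2]
    _ ≤ ∑ A ∈ S.powerset, (if ∃ x ∈ A, ∃ y ∈ Aᶜ, s(u,v) = s(x,y) then 1 else 0) :=
        Finset.sum_le_sum_of_subset hIsub

theorem exists_dense_bipartite_pair {V : Type*} [Fintype V] [DecidableEq V]
    (G : SimpleGraph V) [DecidableRel G.Adj] (S : Finset V) :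
    ∃ X Y : Finset V, X ⊆ S ∧ Disjoint X Y ∧
      ((∑ w ∈ S, G.degree w : ℕ) : ℝ) / 6 ≤
        ((G.edgeFinset.filter fun e => ∃ x ∈ X, ∃ y ∈ Y, e = s(x, y)).card : ℝ) := by
  classical
  rcases S.eq_empty_or_nonempty with rfl | hS
  · exact ⟨∅, ∅, subset_rfl, by simp, by simp⟩
  set E := G.edgeFinset with hE
  set T := E.filter (fun e => ∃ w ∈ S, w ∈ e) with hT
  set D := ∑ w ∈ S, G.degree w with hD
  -- Step A : the degree sum is at most twice the number of edges touching S
  have stepA : D ≤ 2 * T.card := by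
    have hfil : ∀ e : Sym2 V, (∃ w ∈ S, w ∈ e) → (S.filter (· ∈ e)).card ≤ 2 := by
      intro e
      induction e using Sym2.ind with
      | _ a b =>
        intro _
        calc (S.filter (· ∈ s(a,b))).card ≤ ({a, b} : Finset V).card := by
              apply card_le_card
              intro w hw
              simp only [mem_filter, Sym2.mem_iff] at hw
              simp [hw.2]
          _ ≤ 2 := (card_insert_le _ _).trans (by simp)
    have h1 : D = ∑ e ∈ E, (S.filter (· ∈ e)).card := by
      rw [hD]
      have hdeg : ∀ w, G.degree w = (E.filter (fun e => w ∈ e)).card := by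
        intro w
        rw [← G.card_incidenceFinset_eq_degree, G.incidenceFinset_eq_filter]
      calc ∑ w ∈ S, G.degree w
          = ∑ w ∈ S, ∑ e ∈ E, (if w ∈ e then 1 else 0) :=
            Finset.sum_congr rfl fun w _ => by rw [hdeg w, card_filter]
        _ = ∑ e ∈ E, ∑ w ∈ S, (if w ∈ e then 1 else 0) := Finset.sum_comm
        _ = ∑ e ∈ E, (S.filter (· ∈ e)).card :=
            Finset.sum_congr rfl fun e _ => (card_filter _ _).symm
    rw [h1]
    calc ∑ e ∈ E, (S.filter (· ∈ e)).card
        ≤ ∑ e ∈ E, (if (∃ w ∈ S, w ∈ e) then 2 else 0) := by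
          apply Finset.sum_le_sum
          intro e _
          split_ifs with h
          · exact hfil e h
          · push_neg at h
            rw [Finset.filter_eq_empty_iff.mpr h]
            simp
      _ = 2 * T.card := by
          rw [hT, ← Finset.sum_filter, Finset.sum_const, smul_eq_mul, mul_comm]
  -- swap the double sum
  have hswap : ∑ A ∈ S.powerset, (E.filter fun e => ∃ x ∈ A, ∃ y ∈ Aᶜ, e = s(x,y)).card
      = ∑ e ∈ E, ∑ A ∈ S.powerset, (if ∃ x ∈ A, ∃ y ∈ Aᶜ, e = s(x,y) then 1 else 0) :=
    calc ∑ A ∈ S.powerset, (E.filter fun e => ∃ x ∈ A, ∃ y ∈ Aᶜ, e = s(x,y)).card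
        = ∑ A ∈ S.powerset, ∑ e ∈ E, (if ∃ x ∈ A, ∃ y ∈ Aᶜ, e = s(x,y) then 1 else 0) :=
          Finset.sum_congr rfl fun A _ => card_filter _ _
      _ = ∑ e ∈ E, ∑ A ∈ S.powerset, (if ∃ x ∈ A, ∃ y ∈ Aᶜ, e = s(x,y) then 1 else 0) :=
          Finset.sum_comm
  -- per edge bound
  have hper : ∀ e ∈ T, 2 ^ (S.card - 1) ≤
      ∑ A ∈ S.powerset, (if ∃ x ∈ A, ∃ y ∈ Aᶜ, e = s(x,y) then 1 else 0) := by
    intro e he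
    rw [hT, mem_filter] at he
    obtain ⟨heE, w, hwS, hwe⟩ := he
    have hadj : G.Adj w (Sym2.Mem.other hwe) := by
      rw [← SimpleGraph.mem_edgeSet, Sym2.other_spec hwe]
      exact SimpleGraph.mem_edgeFinset.mp heE
    have hcc := cut_count S hadj.ne hwS
    rwa [Sym2.other_spec hwe] at hcc
  have hbig : 2 ^ (S.card - 1) * T.card ≤
      ∑ A ∈ S.powerset, (E.filter fun e => ∃ x ∈ A, ∃ y ∈ Aᶜ, e = s(x,y)).card := by
    rw [hswap]
    calc 2 ^ (S.card - 1) * T.card = ∑ _e ∈ T, 2 ^ (S.card - 1) := by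
          rw [Finset.sum_const, smul_eq_mul, mul_comm]
      _ ≤ ∑ e ∈ T, ∑ A ∈ S.powerset, (if ∃ x ∈ A, ∃ y ∈ Aᶜ, e = s(x,y) then 1 else 0) :=
          Finset.sum_le_sum hper
      _ ≤ _ := Finset.sum_le_sum_of_subset (filter_subset _ _)
  -- averaging
  have havg : ∃ A ∈ S.powerset,
      D ≤ 6 * (E.filter fun e => ∃ x ∈ A, ∃ y ∈ Aᶜ, e = s(x,y)).card := by
    apply Finset.exists_le_of_sum_le (Finset.powerset_nonempty S)
    rw [Finset.sum_const, card_powerset, smul_eq_mul, ← Finset.mul_sum]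
    have hN : 2 ^ S.card = 2 * 2 ^ (S.card - 1) := by
      rw [← pow_succ']
      congr 1
      have := Finset.card_pos.mpr hS
      omega
    calc 2 ^ S.card * D ≤ 2 * 2 ^ (S.card - 1) * (2 * T.card) := by
          rw [← hN]; exact Nat.mul_le_mul_left _ stepA
      _ = 4 * (2 ^ (S.card - 1) * T.card) := by ring
      _ ≤ 6 * (2 ^ (S.card - 1) * T.card) := Nat.mul_le_mul_right _ (by norm_num)
      _ ≤ 6 * ∑ A ∈ S.powerset, (E.filter fun e => ∃ x ∈ A, ∃ y ∈ Aᶜ, e = s(x,y)).card :=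
          Nat.mul_le_mul_left _ hbig
  obtain ⟨A, hAP, hA⟩ := havg
  refine ⟨A, Aᶜ, mem_powerset.mp hAP, disjoint_compl_right, ?_⟩
  rw [div_le_iff₀ (by norm_num : (0:ℝ) < 6)]
  have hcast := (Nat.cast_le (α := ℝ)).mpr hA
  push_cast at hcast ⊢
  linarith
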